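/- Every prefix normal binary word is contained in a prefix normal word chain: for every prefix normal word w of length n there exists a permutation σ of [n] such that every word of the chain c_σ is prefix normal and w = c_σ[i] for some i. -/

import Mathlib

/-- A binary word (list of booleans, `true` = letter 1) is prefix normal if every
factor has at most as many 1s as the prefix of the same length. -/
def prefixNormal (w : List Bool) : Prop :=
  ∀ v : List Bool, v <:+: w → v.count true ≤ (w.take v.length).count true

/-- The word chain of a permutation σ of positions (0-indexed): `pnChain σ 0 = 1^n`
and `pnChain σ (k+1)` flips position `σ k` of `pnChain σ k` from 1 to 0.
(`pnChain σ k` corresponds to the paper's `c_σ[k+1]`.) -/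
def pnChain {n : ℕ} (σ : Equiv.Perm (Fin n)) : ℕ → List Bool
  | 0 => List.replicate n true
  | k + 1 => if h : k < n then (pnChain σ k).set (σ ⟨k, h⟩) false else pnChain σ k

/-- σ is a prefix normal word chain generator iff every word of its chain is prefix normal. -/
def isPNGen {n : ℕ} (σ : Equiv.Perm (Fin n)) : Prop :=
  ∀ k ≤ n, prefixNormal (pnChain σ k)

namespace PNaux

/-- count of ones in the factor of `w` starting at position `i` of length `l`. -/
def G (w : List Bool) (i l : ℕ) : ℕ := ((w.drop i).take l).count true

lemma G_zero (w : List Bool) (i : ℕ) : G w i 0 = 0 := by simp [G]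

lemma G_le (w : List Bool) (i l : ℕ) : G w i l ≤ l := by
  rw [G]; exact le_trans List.count_le_length (by simp)

lemma G_add (w : List Bool) (i l m : ℕ) : G w i (l + m) = G w i l + G w (i + l) m := by
  simp [G, List.take_add, List.drop_drop, List.count_append, Nat.add_comm l i]

lemma G_mono (w : List Bool) (i : ℕ) {l l' : ℕ} (h : l ≤ l') : G w i l ≤ G w i l' := by
  obtain ⟨m, rfl⟩ := Nat.exists_eq_add_of_le h
  rw [G_add]; omega

lemma pn_iff (w : List Bool) : prefixNormal w ↔ ∀ i l, G w i l ≤ G w 0 l := by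
  constructor
  · intro h i l
    have hinf : (w.drop i).take l <:+: w :=
      (List.take_prefix l (w.drop i)).isInfix.trans (List.drop_suffix i w).isInfix
    have h1 := h _ hinf
    have hlen : ((w.drop i).take l).length ≤ l := by simpa using List.length_take_le l (w.drop i)
    refine le_trans h1 ?_
    have : w.take ((w.drop i).take l).length = (w.take l).take ((w.drop i).take l).length := by
      rw [List.take_take, min_eq_left hlen]
    rw [G]; simp only [List.drop_zero]
    rw [this]
    exact List.Sublist.count_le true (List.take_prefix _ _).sublist
  · intro h v hv
    obtain ⟨s, t, rfl⟩ := hv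
    have h1 := h s.length v.length
    have hv1 : ((s ++ v ++ t).drop s.length).take v.length = v := by
      rw [List.append_assoc, List.drop_left, List.take_left]
    rw [G, G, hv1, List.drop_zero] at h1
    exact h1

/-- Claim 1: prepending ones in place of a prefix preserves prefix normality. -/
lemma pn_rep_prefix (w : List Bool) (h : prefixNormal w) (a : ℕ) :
    prefixNormal (List.replicate a true ++ w.drop a) := by
  rw [pn_iff]
  rw [pn_iff] at h
  intro i l
  have key : ∀ j m, G (List.replicate a true ++ w.drop a) j m
      = min m (a - j) + G w (a + (j - a)) (m - (a - j)) := by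
    intro j m
    simp only [G, List.drop_append, List.drop_replicate,
      List.take_append, List.take_replicate, List.count_append,
      List.count_replicate, List.length_replicate, List.drop_drop]
    simp [Nat.add_comm]
  rw [key, key]
  simp only [Nat.sub_zero, Nat.add_zero, Nat.zero_sub]
  -- goal: min l (a - i) + G w (a + (i-a)) (l - (a-i)) ≤ min l a + G w a (l - a)
  rcases le_or_gt a i with hia | hia
  · -- i ≥ a
    have e1 : a - i = 0 := by omega
    have e2 : a + (i - a) = i := by omega
    rw [e1, e2]
    rcases le_or_gt l a with hla | hla
    · have : l - a = 0 := by omega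
      rw [this, G_zero]
      simp only [Nat.sub_zero]
      have := G_le w i l
      omega
    · have h0 := h i l
      have h3 := G_add w 0 a (l - a)
      have e4 : a + (l - a) = l := by omega
      rw [e4, Nat.zero_add] at h3
      have h2 := G_le w 0 a
      simp only [Nat.sub_zero]
      omega
  · rcases le_or_gt l (a - i) with hl | hl
    · have : l - (a - i) = 0 := by omega
      rw [this, G_zero]
      have : l - a = 0 := by omega
      rw [this, G_zero]
      omega
    · rcases le_or_gt l a with hla | hla
      · have := G_le w (a + (i - a)) (l - (a - i))
        have : l - a = 0 := by omega
        rw [this, G_zero]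
        have := G_le w (a + (i - a)) (l - (a - i))
        omega
      · have e2 : a + (i - a) = a := by omega
        rw [e2]
        have e3 : l - (a - i) = (l - a) + i := by omega
        rw [e3, G_add]
        have : a + (l - a) = l := by omega
        rw [this]
        have := G_le w l i
        omega

/-- Claim 2: truncating and padding with zeros preserves prefix normality. -/
lemma pn_take_zeros (w : List Bool) (h : prefixNormal w) (b c : ℕ) :
    prefixNormal (w.take b ++ List.replicate c false) := by
  rw [pn_iff]
  rw [pn_iff] at h
  intro i l
  have key : ∀ j m, G (w.take b ++ List.replicate c false) j m = G w j (min m (b - j)) := by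
    intro j m
    simp only [G, List.drop_append, List.drop_replicate,
      List.take_append, List.take_replicate, List.count_append,
      List.count_replicate, List.drop_take, List.take_take]
    simp
  rw [key, key]
  simp only [Nat.sub_zero]
  exact le_trans (h i (min l (b - i))) (G_mono w 0 (by omega))


lemma chain_eq {n : ℕ} (σ : Equiv.Perm (Fin n)) :
    ∀ k, k ≤ n → pnChain σ k = List.ofFn (fun i : Fin n => decide (k ≤ ((σ.symm i : Fin n) : ℕ)))
  | 0, _ => by
    simp [pnChain]
  | k + 1, hk => by
    have hkn : k < n := hk
    have ih := chain_eq σ k (le_of_lt hkn)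
    rw [pnChain, dif_pos hkn, ih]
    apply List.ext_getElem
    · simp
    · intro i hi1 hi2
      simp only [List.length_ofFn] at hi2
      rw [List.getElem_set]
      rcases eq_or_ne ((σ ⟨k, hkn⟩ : Fin n) : ℕ) i with he | he
      · rw [if_pos he]
        have : σ.symm ⟨i, hi2⟩ = ⟨k, hkn⟩ := by
          apply σ.symm_apply_eq.mpr
          exact Fin.ext he.symm
        rw [List.getElem_ofFn]
        simp [this]
      · rw [if_neg he]
        rw [List.getElem_ofFn, List.getElem_ofFn]
        have hne : ((σ.symm ⟨i, hi2⟩ : Fin n) : ℕ) ≠ k := by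
          intro hc
          apply he
          have : σ.symm ⟨i, hi2⟩ = ⟨k, hkn⟩ := Fin.ext hc
          have := congrArg σ this
          rw [Equiv.apply_symm_apply] at this
          exact congrArg Fin.val this.symm
        apply decide_eq_decide.mpr
        omega


def cT (w : List Bool) (j : ℕ) : ℕ := (w.drop j).count true
def cF (w : List Bool) (j : ℕ) : ℕ := (w.drop j).count false

lemma count_tf (l : List Bool) : l.count true + l.count false = l.length := by
  induction l with
  | nil => simp
  | cons a t ih => cases a <;> simp [List.count_cons] <;> omega

lemma cTF (w : List Bool) (j : ℕ) : cT w j + cF w j = w.length - j := by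
  rw [cT, cF, count_tf]; simp

lemma cT_succ (w : List Bool) (i : ℕ) (hi : i < w.length) :
    cT w i = (if w[i] = true then 1 else 0) + cT w (i + 1) := by
  rw [cT, cT, List.drop_eq_getElem_cons hi, List.count_cons]
  rcases h : w[i] <;> simp [h] <;> omega

lemma cF_succ (w : List Bool) (i : ℕ) (hi : i < w.length) :
    cF w i = (if w[i] = true then 0 else 1) + cF w (i + 1) := by
  rw [cF, cF, List.drop_eq_getElem_cons hi, List.count_cons]
  rcases h : w[i] <;> simp [h] <;> omega

lemma cT_anti (w : List Bool) {j j' : ℕ} (h : j ≤ j') : cT w j' ≤ cT w j := by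
  rw [cT, cT]
  have : w.drop j' = (w.drop j).drop (j' - j) := by rw [List.drop_drop]; congr 1; omega
  rw [this]
  exact List.Sublist.count_le true (List.drop_sublist _ _)

lemma cF_anti (w : List Bool) {j j' : ℕ} (h : j ≤ j') : cF w j' ≤ cF w j := by
  rw [cF, cF]
  have : w.drop j' = (w.drop j).drop (j' - j) := by rw [List.drop_drop]; congr 1; omega
  rw [this]
  exact List.Sublist.count_le false (List.drop_sublist _ _)

/-- rank of position `i` in the flipping order: zeros (letters `false`) in decreasing
position order first, then ones in decreasing position order. -/
def fv (w : List Bool) (i : ℕ) : ℕ :=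
  if w.getD i false = true then w.count false + cT w (i + 1) else cF w (i + 1)

lemma fv_lt (w : List Bool) (i : ℕ) (hi : i < w.length) : fv w i < w.length := by
  rw [fv, List.getD_eq_getElem w false hi]
  have h1 := cT_succ w i hi
  have h2 := cF_succ w i hi
  have h3 := cTF w 0
  have h4 : cT w i ≤ cT w 0 := cT_anti w (Nat.zero_le i)
  have h5 : cF w i ≤ cF w 0 := cF_anti w (Nat.zero_le i)
  have h6 : w.count false = cF w 0 := by rw [cF]; simp
  rcases h : w[i] <;> simp [h] at h1 h2 ⊢ <;> omega

lemma fv_lt_z (w : List Bool) (i : ℕ) (hi : i < w.length) (h : w[i] = false) :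
    fv w i < w.count false := by
  rw [fv, List.getD_eq_getElem w false hi, h]
  have h2 := cF_succ w i hi
  have h5 : cF w i ≤ cF w 0 := cF_anti w (Nat.zero_le i)
  have h6 : w.count false = cF w 0 := by rw [cF]; simp
  simp [h] at h2
  simp
  omega

lemma fv_ge_z (w : List Bool) (i : ℕ) (hi : i < w.length) (h : w[i] = true) :
    w.count false ≤ fv w i := by
  rw [fv, List.getD_eq_getElem w false hi, h]
  simp

lemma fv_inj (w : List Bool) : ∀ i j : ℕ, i < w.length → j < w.length → i < j →
    fv w i ≠ fv w j := by
  intro i j hi hj hij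
  have hcT : cT w j ≤ cT w (i+1) := cT_anti w (by omega)
  have hcF : cF w j ≤ cF w (i+1) := cF_anti w (by omega)
  have hTs := cT_succ w j hj
  have hFs := cF_succ w j hj
  rcases h1 : w[i] <;> rcases h2 : w[j]
  · -- false false
    have := fv_lt_z w i hi h1
    rw [fv, fv, List.getD_eq_getElem w false hi, List.getD_eq_getElem w false hj, h1, h2]
    simp [h2] at hFs
    simp
    omega
  · -- false true
    have ha := fv_lt_z w i hi h1
    have hb := fv_ge_z w j hj h2
    omega
  · -- true false
    have ha := fv_ge_z w i hi h1
    have hb := fv_lt_z w j hj h2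
    omega
  · -- true true
    rw [fv, fv, List.getD_eq_getElem w false hi, List.getD_eq_getElem w false hj, h1, h2]
    simp [h2] at hTs
    simp
    omega


lemma fv_false (w : List Bool) (i : ℕ) (hi : i < w.length) (h : w[i] = false) :
    fv w i = cF w (i + 1) := by
  rw [fv, List.getD_eq_getElem w false hi, h]; simp

lemma fv_true (w : List Bool) (i : ℕ) (hi : i < w.length) (h : w[i] = true) :
    fv w i = w.count false + cT w (i + 1) := by
  rw [fv, List.getD_eq_getElem w false hi, h]; simp

lemma cF_succ' (w : List Bool) (i : ℕ) (hi : i < w.length) (h : w[i] = false) :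
    cF w i = 1 + cF w (i + 1) := by
  have := cF_succ w i hi; simp [h] at this; omega

lemma cT_succ' (w : List Bool) (i : ℕ) (hi : i < w.length) (h : w[i] = true) :
    cT w i = 1 + cT w (i + 1) := by
  have := cT_succ w i hi; simp [h] at this; omega

/-- the permutation (as a function `Fin n → Fin n`, `n = w.length`). -/
def fperm (w : List Bool) : Fin w.length → Fin w.length :=
  fun i => ⟨fv w i.val, fv_lt w i.val i.isLt⟩

lemma fperm_bij (w : List Bool) : Function.Bijective (fperm w) := by
  apply Finite.injective_iff_bijective.mp
  intro i j h
  have hv : fv w i.val = fv w j.val := congrArg Fin.val h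
  by_contra hne
  have : i.val ≠ j.val := fun hc => hne (Fin.ext hc)
  rcases Nat.lt_or_ge i.val j.val with hlt | hge
  · exact fv_inj w i.val j.val i.isLt j.isLt hlt hv
  · have : j.val < i.val := by omega
    exact fv_inj w j.val i.val j.isLt i.isLt this hv.symm


end PNaux

open PNaux in
/-- Every prefix normal word is part of a prefix normal word chain. -/
theorem mem_pn_chain (w : List Bool) (hpn : prefixNormal w) :
    ∃ σ : Equiv.Perm (Fin w.length), isPNGen σ ∧ ∃ i ≤ w.length, pnChain σ i = w := by
  classical
  set n := w.length with hn
  set z := w.count false with hzdef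
  have hz : z ≤ n := List.count_le_length
  set σ : Equiv.Perm (Fin n) := (Equiv.ofBijective (fperm w) (fperm_bij w)).symm with hσ
  have hsymm : ∀ i : Fin n, ((σ.symm i : Fin n) : ℕ) = fv w i.val := by
    intro i
    rw [hσ, Equiv.symm_symm]
    rfl
  have hchain : ∀ k, k ≤ n →
      pnChain σ k = List.ofFn (fun i : Fin n => decide (k ≤ fv w i.val)) := by
    intro k hk
    rw [chain_eq σ k hk]
    congr 1
  have hzF : z = cF w 0 := by rw [cF]; simp [hzdef]
  have hcFn : cF w n = 0 := by rw [cF, hn]; simp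
  have hcTn : cT w n = 0 := by rw [cT, hn]; simp
  refine ⟨σ, ?_, z, hz, ?_⟩
  · -- isPNGen
    intro k hk
    rcases le_total k z with hkz | hzk
    · -- stage A
      have hex : ∃ a, cF w a ≤ k := ⟨n, by omega⟩
      set a := Nat.find hex with hadef
      have ha1 : cF w a ≤ k := Nat.find_spec hex
      have ha2 : ∀ m, m < a → k < cF w m := by
        intro m hm
        have := Nat.find_min hex hm
        omega
      have haN : a ≤ n := Nat.find_le (by omega)
      have heq : pnChain σ k = List.replicate a true ++ w.drop a := by
        rw [hchain k hk]
        apply List.ext_getElem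
        · simp; omega
        · intro i hi1 hi2
          simp only [List.length_ofFn] at hi1
          rw [List.getElem_ofFn]
          simp only
          rcases Nat.lt_or_ge i a with hia | hia
          · rw [List.getElem_append_left (by simpa using hia), List.getElem_replicate]
            simp only [decide_eq_true_eq]
            rcases h : w[i] with _ | _
            · have h1 := fv_false w i hi1 h
              have h2 := cF_succ' w i hi1 h
              have h3 := ha2 i hia
              omega
            · have h1 := fv_true w i hi1 h
              omega
          · rw [List.getElem_append_right (by simpa using hia)]
            have hdl : i - (List.replicate a true).length < (w.drop a).length := by
              simp; omega
            rw [List.getElem_drop]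
            have hgoal : w[a + (i - (List.replicate a true).length)]'(by simp at hdl ⊢; omega)
                = w[i]'hi1 := by
              congr 1; simp; omega
            rw [hgoal]
            rcases h : w[i] with _ | _
            · have h1 := fv_false w i hi1 h
              have h2 := cF_succ' w i hi1 h
              have h4 : cF w i ≤ cF w a := cF_anti w hia
              simp only [decide_eq_false_iff_not]
              omega
            · have h1 := fv_true w i hi1 h
              simp only [decide_eq_true_eq]
              omega
      rw [heq]
      exact pn_rep_prefix w hpn a
    · -- stage B
      have hex : ∃ b, z + cT w b ≤ k := ⟨n, by omega⟩
      set b := Nat.find hex with hbdef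
      have hb1 : z + cT w b ≤ k := Nat.find_spec hex
      have hb2 : ∀ m, m < b → k < z + cT w m := by
        intro m hm
        have := Nat.find_min hex hm
        omega
      have hbN : b ≤ n := Nat.find_le (by omega)
      have heq : pnChain σ k = w.take b ++ List.replicate (n - b) false := by
        rw [hchain k hk]
        apply List.ext_getElem
        · simp; omega
        · intro i hi1 hi2
          simp only [List.length_ofFn] at hi1
          rw [List.getElem_ofFn]
          simp only
          rcases Nat.lt_or_ge i b with hib | hib
          · rw [List.getElem_append_left (by simp; omega), List.getElem_take]
            rcases h : w[i] with _ | _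
            · have h2 := fv_lt_z w i hi1 h
              simp only [decide_eq_false_iff_not]
              omega
            · have h1 := fv_true w i hi1 h
              have h2 := cT_succ' w i hi1 h
              have h3 := hb2 i hib
              simp only [decide_eq_true_eq]
              omega
          · rw [List.getElem_append_right (by simp; omega), List.getElem_replicate]
            rcases h : w[i] with _ | _
            · have h2 := fv_lt_z w i hi1 h
              simp only [decide_eq_false_iff_not]
              omega
            · have h1 := fv_true w i hi1 h
              have h2 := cT_succ' w i hi1 h
              have h4 : cT w i ≤ cT w b := cT_anti w hib
              simp only [decide_eq_false_iff_not]
              omega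
      rw [heq]
      exact pn_take_zeros w hpn b (n - b)
  · -- pnChain σ z = w
    rw [hchain z hz]
    apply List.ext_getElem
    · simp [hn]
    · intro i hi1 hi2
      simp only [List.length_ofFn] at hi1
      rw [List.getElem_ofFn]
      simp only
      rcases h : w[i] with _ | _
      · have h2 := fv_lt_z w i hi1 h
        simp only [decide_eq_false_iff_not]
        omega
      · have h2 := fv_ge_z w i hi1 h
        simpa using h2
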